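/- arXiv:2511.22123 — 3 statements merged into one kernel-verified Lean document; each statement's English description precedes it below -/
import Mathlib

section
/- Let H be a real inner product space, m ≥ 1, u_1, …, u_m ∈ H, and U the Gram matrix U_{ij} = (1/m)⟨u_i, u_j⟩, with eigenvalues λ_1 ≥ λ_2 ≥ … ≥ λ_m (listed with multiplicity in decreasing order, associated to an orthonormal eigenbasis of ℝ^m). Then for every n with 1 ≤ n ≤ m and every orthonormal family ψ_1, …, ψ_n ∈ H, the captured energy is bounded by the sum of the n largest eigenvalues: (1/m) Σ_{k=1}^m Σ_{i=1}^n ⟨u_k, ψ_i⟩² ≤ Σ_{i=1}^n λ_i. -/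
open RealInnerProductSpace Matrix

private lemma aux_sum_castLE {β : Type*} [AddCommMonoid β] {n m : ℕ} (h : n ≤ m)
    (g : Fin m → β) :
    ∑ ℓ : Fin m, (if (ℓ:ℕ) < n then g ℓ else 0) = ∑ i : Fin n, g (Fin.castLE h i) := by
  rw [← Finset.sum_filter]
  rw [show Finset.univ.filter (fun ℓ : Fin m => (ℓ:ℕ) < n)
      = Finset.univ.map (Fin.castLEEmb h) by
    ext ℓ
    simp only [Finset.mem_filter, Finset.mem_univ, true_and, Finset.mem_map,
      Fin.castLEEmb, Function.Embedding.coeFn_mk]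
    constructor
    · intro hℓ; exact ⟨⟨ℓ, hℓ⟩, rfl⟩
    · rintro ⟨a, rfl⟩; exact a.isLt]
  rw [Finset.sum_map]
  rfl

private lemma aux_bessel {H : Type*} [NormedAddCommGroup H] [InnerProductSpace ℝ H]
    (m : ℕ) (lam : Fin m → ℝ) (v : Fin m → H) (M : ℝ) (hM : 0 < M)
    (hlam : ∀ ℓ, 0 ≤ lam ℓ)
    (hv : ∀ ℓ q, ⟪v ℓ, v q⟫ = M * lam q * (if ℓ = q then 1 else 0))
    (x : H) (hx : ‖x‖ ^ 2 = 1) :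
    ∑ ℓ, (if lam ℓ = 0 then 0 else ⟪v ℓ, x⟫ ^ 2 / (M * lam ℓ)) ≤ 1 := by
  set e : {ℓ : Fin m // lam ℓ ≠ 0} → H := fun ℓ => (Real.sqrt (M * lam ℓ))⁻¹ • v ℓ with he
  have hpos : ∀ ℓ : {ℓ : Fin m // lam ℓ ≠ 0}, 0 < M * lam ℓ :=
    fun ℓ => mul_pos hM (lt_of_le_of_ne (hlam ℓ) (Ne.symm ℓ.2))
  have hsq : ∀ ℓ : {ℓ : Fin m // lam ℓ ≠ 0},
      Real.sqrt (M * lam ℓ) * Real.sqrt (M * lam ℓ) = M * lam ℓ :=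
    fun ℓ => Real.mul_self_sqrt (le_of_lt (hpos ℓ))
  have hsne : ∀ ℓ : {ℓ : Fin m // lam ℓ ≠ 0}, Real.sqrt (M * lam ℓ) ≠ 0 :=
    fun ℓ => ne_of_gt (Real.sqrt_pos.mpr (hpos ℓ))
  have hone : Orthonormal ℝ e := by
    rw [orthonormal_iff_ite]
    intro ℓ q
    simp only [he, real_inner_smul_left, real_inner_smul_right, hv]
    rcases eq_or_ne ℓ q with rfl | hne
    · simp only [if_pos rfl, mul_one]
      have hl : (0:ℝ) < lam ℓ := lt_of_le_of_ne (hlam ℓ) (Ne.symm ℓ.2)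
      rw [← hsq ℓ]
      field_simp
      rw [Real.sqrt_sq (Real.sqrt_nonneg _)]
    · have h2 : (ℓ : Fin m) ≠ q := fun h => hne (Subtype.ext h)
      simp [h2, if_neg hne]
  have hb := hone.sum_inner_products_le (s := Finset.univ) x
  have hterm : ∀ ℓ : {ℓ : Fin m // lam ℓ ≠ 0},
      ‖⟪e ℓ, x⟫‖ ^ 2 = ⟪v ℓ, x⟫ ^ 2 / (M * lam ℓ) := by
    intro ℓ
    rw [Real.norm_eq_abs, sq_abs, he]
    simp only [real_inner_smul_left]
    rw [mul_pow, sq, ← mul_inv, hsq ℓ]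
    ring
  calc ∑ ℓ, (if lam ℓ = 0 then 0 else ⟪v ℓ, x⟫ ^ 2 / (M * lam ℓ))
      = ∑ ℓ ∈ Finset.univ.filter (fun ℓ : Fin m => lam ℓ ≠ 0),
          ⟪v ℓ, x⟫ ^ 2 / (M * lam ℓ) := by
        rw [Finset.sum_filter]
        refine Finset.sum_congr rfl fun ℓ _ => ?_
        by_cases h : lam ℓ = 0 <;> simp [h]
    _ = ∑ ℓ : {ℓ : Fin m // lam ℓ ≠ 0}, ⟪(v ℓ : H), x⟫ ^ 2 / (M * lam ℓ) := by
        rw [Finset.sum_subtype]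
        intro ℓ; simp
    _ = ∑ ℓ : {ℓ : Fin m // lam ℓ ≠ 0}, ‖⟪e ℓ, x⟫‖ ^ 2 :=
        Finset.sum_congr rfl fun ℓ _ => (hterm ℓ).symm
    _ ≤ ‖x‖ ^ 2 := hb
    _ = 1 := hx

/-- Captured-energy bound: if the Gram matrix `U_{ij} = (1/m)⟨u_i, u_j⟩` has an
orthonormal eigenbasis `c_1, …, c_m` with eigenvalues `λ_1 ≥ … ≥ λ_m` listed in
decreasing order, then for every `n` with `1 ≤ n ≤ m` and every orthonormal
family `ψ_1, …, ψ_n` in `H`, the captured energy satisfies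
`(1/m) Σ_k Σ_i ⟨u_k, ψ_i⟩² ≤ Σ_{i=1}^n λ_i`. -/
theorem captured_energy_le_sum_largest_eigenvalues
    {H : Type*} [NormedAddCommGroup H] [InnerProductSpace ℝ H]
    (m : ℕ) (hm : 1 ≤ m) (u : Fin m → H)
    (U : Matrix (Fin m) (Fin m) ℝ)
    (hU : ∀ i j, U i j = (1 / (m : ℝ)) * ⟪u i, u j⟫)
    (c : Fin m → Fin m → ℝ) (lam : Fin m → ℝ)
    (horth : ∀ ℓ q, c ℓ ⬝ᵥ c q = if ℓ = q then 1 else 0)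
    (heig : ∀ ℓ, U.mulVec (c ℓ) = lam ℓ • c ℓ)
    (hdecr : ∀ i j : Fin m, i ≤ j → lam j ≤ lam i)
    (n : ℕ) (hn : 1 ≤ n) (hnm : n ≤ m)
    (ψ : Fin n → H)
    (hψ : ∀ i j, ⟪ψ i, ψ j⟫ = if i = j then 1 else 0) :
    (1 / (m : ℝ)) * ∑ k, ∑ i, ⟪u k, ψ i⟫ ^ 2
      ≤ ∑ i : Fin n, lam (Fin.castLE hnm i) := by
  have hM : (0:ℝ) < m := by exact_mod_cast hm
  have hU' : ∀ i j, ⟪u i, u j⟫ = (m:ℝ) * U i j := by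
    intro i j; rw [hU]; field_simp
  -- the eigenvector snapshots
  set v : Fin m → H := fun ℓ => ∑ k, c ℓ k • u k with hvdef
  have hv : ∀ ℓ q, ⟪v ℓ, v q⟫ = (m:ℝ) * lam q * (if ℓ = q then 1 else 0) := by
    intro ℓ q
    have h1 : ⟪v ℓ, v q⟫ = ∑ k, c ℓ k * ((m:ℝ) * (U.mulVec (c q) k)) := by
      rw [hvdef, sum_inner]
      refine Finset.sum_congr rfl fun k _ => ?_
      rw [real_inner_smul_left, inner_sum]
      congr 1
      rw [Matrix.mulVec, dotProduct, Finset.mul_sum]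
      refine Finset.sum_congr rfl fun k' _ => ?_
      rw [real_inner_smul_right, hU']
      ring
    rw [h1]
    have h2 : ∀ k, (U.mulVec (c q)) k = lam q * c q k := by
      intro k; rw [heig]; simp
    simp_rw [h2]
    rw [← horth ℓ q, dotProduct, Finset.mul_sum]
    exact Finset.sum_congr rfl fun k _ => by ring
  have hlam : ∀ ℓ, 0 ≤ lam ℓ := by
    intro ℓ
    have h1 := hv ℓ ℓ
    rw [if_pos rfl, mul_one] at h1
    have h2 : (0:ℝ) ≤ ⟪v ℓ, v ℓ⟫ := real_inner_self_nonneg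
    nlinarith
  -- column orthonormality
  have hcol : ∀ k k', ∑ ℓ, c ℓ k * c ℓ k' = if k = k' then 1 else 0 := by
    have hCC : (Matrix.of c) * (Matrix.of c)ᵀ = 1 := by
      ext ℓ q
      simp only [Matrix.mul_apply, Matrix.transpose_apply, Matrix.of_apply,
        Matrix.one_apply]
      rw [show ∑ x : Fin m, c ℓ x * c q x = c ℓ ⬝ᵥ c q from rfl, horth ℓ q]
    have hCtC : (Matrix.of c)ᵀ * (Matrix.of c) = 1 := mul_eq_one_comm.mp hCC
    intro k k'
    have h3 := congrFun (congrFun hCtC k) k'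
    simp only [Matrix.mul_apply, Matrix.transpose_apply, Matrix.of_apply,
      Matrix.one_apply] at h3
    simpa using h3
  -- the key change-of-basis identity
  have hkey : ∀ i, ∑ ℓ, ⟪v ℓ, ψ i⟫ ^ 2 = ∑ k, ⟪u k, ψ i⟫ ^ 2 := by
    intro i
    set a : Fin m → ℝ := fun k => ⟪u k, ψ i⟫ with ha
    have hvi : ∀ ℓ, ⟪v ℓ, ψ i⟫ = ∑ k, c ℓ k * a k := by
      intro ℓ
      rw [hvdef, sum_inner]
      exact Finset.sum_congr rfl fun k _ => by rw [real_inner_smul_left]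
    simp_rw [hvi]
    have h1 : ∀ ℓ : Fin m, (∑ k, c ℓ k * a k) ^ 2
        = ∑ k, ∑ k', (a k * a k') * (c ℓ k * c ℓ k') := by
      intro ℓ
      rw [sq, Finset.sum_mul_sum]
      exact Finset.sum_congr rfl fun k _ => Finset.sum_congr rfl fun k' _ => by ring
    simp_rw [h1]
    rw [Finset.sum_comm]
    have h2 : ∀ k : Fin m, ∑ ℓ, ∑ k', (a k * a k') * (c ℓ k * c ℓ k') = a k ^ 2 := by
      intro k
      rw [Finset.sum_comm]
      have h3 : ∀ k' : Fin m, ∑ ℓ, (a k * a k') * (c ℓ k * c ℓ k')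
          = (a k * a k') * (if k = k' then 1 else 0) := by
        intro k'
        rw [← hcol k k', Finset.mul_sum]
      simp_rw [h3]
      simp [sq]
    simp_rw [h2]
    rfl
  -- energy fractions
  set s : Fin m → ℝ :=
    fun ℓ => if lam ℓ = 0 then 0 else (∑ i, ⟪v ℓ, ψ i⟫ ^ 2) / ((m:ℝ) * lam ℓ) with hs
  have hv0 : ∀ ℓ, lam ℓ = 0 → v ℓ = 0 := by
    intro ℓ h
    have h1 := hv ℓ ℓ
    rw [if_pos rfl, mul_one, h, mul_zero] at h1
    exact inner_self_eq_zero.mp h1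
  have hrep : ∀ ℓ, (1 / (m:ℝ)) * ∑ i, ⟪v ℓ, ψ i⟫ ^ 2 = lam ℓ * s ℓ := by
    intro ℓ
    by_cases h : lam ℓ = 0
    · simp [hs, h, hv0 ℓ h]
    · rw [hs]
      simp only [if_neg h]
      field_simp
  have hψn2 : ∀ i, ‖ψ i‖ ^ 2 = 1 := by
    intro i
    rw [← real_inner_self_eq_norm_sq, hψ i i, if_pos rfl]
  have hs0 : ∀ ℓ, 0 ≤ s ℓ := by
    intro ℓ
    rw [hs]
    by_cases h : lam ℓ = 0
    · simp [h]
    · simp only [if_neg h]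
      have hpos : (0:ℝ) < (m:ℝ) * lam ℓ :=
        mul_pos hM (lt_of_le_of_ne (hlam ℓ) (Ne.symm h))
      exact div_nonneg (Finset.sum_nonneg fun i _ => sq_nonneg _) (le_of_lt hpos)
  have hs1 : ∀ ℓ, s ℓ ≤ 1 := by
    intro ℓ
    rw [hs]
    by_cases h : lam ℓ = 0
    · simp [h]
    · simp only [if_neg h]
      have hpos : (0:ℝ) < (m:ℝ) * lam ℓ :=
        mul_pos hM (lt_of_le_of_ne (hlam ℓ) (Ne.symm h))
      rw [div_le_one hpos]
      have hon : Orthonormal ℝ ψ := orthonormal_iff_ite.mpr hψ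
      have hb := hon.sum_inner_products_le (s := Finset.univ) (v ℓ)
      calc ∑ i, ⟪v ℓ, ψ i⟫ ^ 2 = ∑ i, ‖⟪ψ i, v ℓ⟫‖ ^ 2 := by
            refine Finset.sum_congr rfl fun i _ => ?_
            rw [Real.norm_eq_abs, sq_abs, real_inner_comm]
        _ ≤ ‖v ℓ‖ ^ 2 := hb
        _ = (m:ℝ) * lam ℓ := by
            rw [← real_inner_self_eq_norm_sq, hv ℓ ℓ, if_pos rfl, mul_one]
  have hssum : ∑ ℓ, s ℓ ≤ (n:ℝ) := by
    have h1 : ∀ ℓ, s ℓ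
        = ∑ i, (if lam ℓ = 0 then 0 else ⟪v ℓ, ψ i⟫ ^ 2 / ((m:ℝ) * lam ℓ)) := by
      intro ℓ
      rw [hs]
      by_cases h : lam ℓ = 0 <;> simp [h, Finset.sum_div]
    simp_rw [h1]
    rw [Finset.sum_comm]
    calc ∑ i : Fin n, ∑ ℓ, (if lam ℓ = 0 then 0 else ⟪v ℓ, ψ i⟫ ^ 2 / ((m:ℝ) * lam ℓ))
        ≤ ∑ _i : Fin n, (1:ℝ) := by
          refine Finset.sum_le_sum fun i _ => ?_
          exact aux_bessel m lam v (m:ℝ) hM hlam hv (ψ i) (hψn2 i)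
      _ = (n:ℝ) := by simp
  -- rewrite the energy
  have hE : (1 / (m : ℝ)) * ∑ k, ∑ i, ⟪u k, ψ i⟫ ^ 2 = ∑ ℓ, lam ℓ * s ℓ := by
    calc (1 / (m : ℝ)) * ∑ k, ∑ i, ⟪u k, ψ i⟫ ^ 2
        = (1 / (m : ℝ)) * ∑ i, ∑ k, ⟪u k, ψ i⟫ ^ 2 := by rw [Finset.sum_comm]
      _ = (1 / (m : ℝ)) * ∑ i, ∑ ℓ, ⟪v ℓ, ψ i⟫ ^ 2 := by
          simp_rw [hkey]
      _ = ∑ ℓ, (1 / (m : ℝ)) * ∑ i, ⟪v ℓ, ψ i⟫ ^ 2 := by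
          rw [Finset.sum_comm, Finset.mul_sum]
      _ = ∑ ℓ, lam ℓ * s ℓ := Finset.sum_congr rfl fun ℓ _ => hrep ℓ
  rw [hE]
  -- the rearrangement bound
  have hn1m : n - 1 < m := by omega
  set lam0 : ℝ := lam ⟨n - 1, hn1m⟩ with hlam0
  have hlam00 : 0 ≤ lam0 := hlam _
  have hpt : ∀ ℓ : Fin m,
      lam ℓ * s ℓ ≤ (if (ℓ:ℕ) < n then lam ℓ - lam0 else 0) + lam0 * s ℓ := by
    intro ℓ
    by_cases h : (ℓ:ℕ) < n
    · rw [if_pos h]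
      have h1 : lam0 ≤ lam ℓ := hdecr ℓ ⟨n - 1, hn1m⟩ (by rw [Fin.le_def]; simp; omega)
      nlinarith [hs0 ℓ, hs1 ℓ]
    · rw [if_neg h]
      have h1 : lam ℓ ≤ lam0 := hdecr ⟨n - 1, hn1m⟩ ℓ (by rw [Fin.le_def]; simp; omega)
      nlinarith [hs0 ℓ]
  calc ∑ ℓ : Fin m, lam ℓ * s ℓ
      ≤ ∑ ℓ : Fin m, ((if (ℓ:ℕ) < n then lam ℓ - lam0 else 0) + lam0 * s ℓ) :=
        Finset.sum_le_sum fun ℓ _ => hpt ℓ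
    _ = (∑ i : Fin n, (lam (Fin.castLE hnm i) - lam0)) + lam0 * ∑ ℓ : Fin m, s ℓ := by
        rw [Finset.sum_add_distrib, aux_sum_castLE hnm, Finset.mul_sum]
    _ = (∑ i : Fin n, lam (Fin.castLE hnm i)) - (n:ℝ) * lam0 + lam0 * ∑ ℓ : Fin m, s ℓ := by
        rw [Finset.sum_sub_distrib]
        simp [mul_comm]
    _ ≤ (∑ i : Fin n, lam (Fin.castLE hnm i)) - (n:ℝ) * lam0 + lam0 * (n:ℝ) := by
        have := mul_le_mul_of_nonneg_left hssum hlam00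
        linarith
    _ = ∑ i : Fin n, lam (Fin.castLE hnm i) := by ring
end

section
/- Let H be a real inner product space, m ≥ 1, u_1, …, u_m ∈ H, and U the Gram matrix U_{ij} = (1/m)⟨u_i, u_j⟩, with eigenvalues λ_1 ≥ λ_2 ≥ … ≥ λ_m listed with multiplicity in decreasing order. Then for every n with 1 ≤ n ≤ m and every orthonormal family ψ_1, …, ψ_n ∈ H, the mean-square reconstruction error of the snapshot ensemble is bounded below by the sum of the discarded eigenvalues: (1/m) Σ_{k=1}^m ‖u_k − Σ_{i=1}^n ⟨u_k, ψ_i⟩ ψ_i‖² ≥ Σ_{ℓ=n+1}^m λ_ℓ. -/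
open RealInnerProductSpace Matrix Finset


private lemma pod_proj_error {H : Type*} [NormedAddCommGroup H] [InnerProductSpace ℝ H]
    {n : ℕ} (ψ : Fin n → H) (hψ : ∀ i j, ⟪ψ i, ψ j⟫ = if i = j then 1 else 0)
    (x : H) :
    ‖x - ∑ i, ⟪x, ψ i⟫ • ψ i‖ ^ 2 = ‖x‖ ^ 2 - ∑ i, ⟪x, ψ i⟫ ^ 2 := by
  have h1 : ⟪x, ∑ i, ⟪x, ψ i⟫ • ψ i⟫ = ∑ i, ⟪x, ψ i⟫ ^ 2 := by
    rw [inner_sum]; simp [real_inner_smul_right, sq]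
  have h2 : ⟪∑ i, ⟪x, ψ i⟫ • ψ i, ∑ j, ⟪x, ψ j⟫ • ψ j⟫ = ∑ i, ⟪x, ψ i⟫ ^ 2 := by
    rw [sum_inner]
    simp only [real_inner_smul_left, inner_sum, real_inner_smul_right, hψ]
    simp [Finset.mul_sum, mul_ite, sq]
  have h3 : ‖∑ i, ⟪x, ψ i⟫ • ψ i‖ ^ 2 = ∑ i, ⟪x, ψ i⟫ ^ 2 := by
    rw [← real_inner_self_eq_norm_sq]; exact h2
  rw [norm_sub_sq_real, h1, h3]; ring

private lemma pod_card_lt {m n : ℕ} (hnm : n ≤ m) :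
    (Finset.univ.filter (fun ℓ : Fin m => (ℓ : ℕ) < n)).card = n := by
  have : Finset.univ.filter (fun ℓ : Fin m => (ℓ : ℕ) < n)
      = (Finset.range n).attachFin (fun i hi => lt_of_lt_of_le (Finset.mem_range.mp hi) hnm) := by
    ext ℓ; simp [Finset.mem_attachFin]
  rw [this, Finset.card_attachFin, Finset.card_range]

private lemma pod_sum_bound {m n : ℕ} (hnm : n ≤ m) (lam t : Fin m → ℝ)
    (hlam0 : ∀ ℓ, 0 ≤ lam ℓ) (hdecr : ∀ i j : Fin m, i ≤ j → lam j ≤ lam i)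
    (S : Finset (Fin m))
    (ht0 : ∀ ℓ, 0 ≤ t ℓ) (ht1 : ∀ ℓ ∈ S, t ℓ ≤ 1)
    (htn : ∑ ℓ ∈ S, t ℓ ≤ (n : ℝ)) :
    ∑ ℓ ∈ S, lam ℓ * t ℓ ≤ ∑ ℓ ∈ Finset.univ.filter (fun ℓ : Fin m => (ℓ : ℕ) < n), lam ℓ := by
  rcases eq_or_lt_of_le hnm with h | h
  · have huniv : Finset.univ.filter (fun ℓ : Fin m => (ℓ : ℕ) < n) = Finset.univ := by
      ext ℓ; have := ℓ.isLt
      simp only [Finset.mem_filter, Finset.mem_univ, true_and, iff_true]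
      omega
    rw [huniv]
    calc ∑ ℓ ∈ S, lam ℓ * t ℓ ≤ ∑ ℓ ∈ S, lam ℓ := by
          apply Finset.sum_le_sum; intro ℓ hℓ
          nlinarith [hlam0 ℓ, ht1 ℓ hℓ, ht0 ℓ]
      _ ≤ ∑ ℓ, lam ℓ := Finset.sum_le_sum_of_subset_of_nonneg (Finset.subset_univ S)
          (fun ℓ _ _ => hlam0 ℓ)
  · set p : Fin m := ⟨n, h⟩ with hp
    set A := Finset.univ.filter (fun ℓ : Fin m => (ℓ : ℕ) < n) with hA
    have hsplit : ∑ ℓ ∈ S, lam ℓ * t ℓ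
        = ∑ ℓ ∈ S.filter (fun ℓ : Fin m => (ℓ : ℕ) < n), lam ℓ * t ℓ
          + ∑ ℓ ∈ S.filter (fun ℓ : Fin m => ¬ (ℓ : ℕ) < n), lam ℓ * t ℓ :=
      (Finset.sum_filter_add_sum_filter_not S _ _).symm
    have htsplit : ∑ ℓ ∈ S.filter (fun ℓ : Fin m => (ℓ : ℕ) < n), t ℓ
        + ∑ ℓ ∈ S.filter (fun ℓ : Fin m => ¬ (ℓ : ℕ) < n), t ℓ = ∑ ℓ ∈ S, t ℓ :=
      Finset.sum_filter_add_sum_filter_not S _ _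
    have hB : ∑ ℓ ∈ S.filter (fun ℓ : Fin m => ¬ (ℓ : ℕ) < n), lam ℓ * t ℓ
        ≤ lam p * ∑ ℓ ∈ S.filter (fun ℓ : Fin m => ¬ (ℓ : ℕ) < n), t ℓ := by
      rw [Finset.mul_sum]
      apply Finset.sum_le_sum
      intro ℓ hℓ
      have hnℓ : ¬ (ℓ : ℕ) < n := (Finset.mem_filter.mp hℓ).2
      have : lam ℓ ≤ lam p := hdecr p ℓ (by simp [hp, Fin.le_def]; omega)
      exact mul_le_mul_of_nonneg_right this (ht0 ℓ)
    have hA1 : ∑ ℓ ∈ S.filter (fun ℓ : Fin m => (ℓ : ℕ) < n), (lam ℓ - lam p) * t ℓ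
        ≤ ∑ ℓ ∈ A, (lam ℓ - lam p) := by
      calc ∑ ℓ ∈ S.filter (fun ℓ : Fin m => (ℓ : ℕ) < n), (lam ℓ - lam p) * t ℓ
          ≤ ∑ ℓ ∈ S.filter (fun ℓ : Fin m => (ℓ : ℕ) < n), (lam ℓ - lam p) := by
            apply Finset.sum_le_sum
            intro ℓ hℓ
            have hℓn : (ℓ : ℕ) < n := (Finset.mem_filter.mp hℓ).2
            have hnn : 0 ≤ lam ℓ - lam p := by
              have : lam p ≤ lam ℓ := hdecr ℓ p (by simp [hp, Fin.le_def]; omega)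
              linarith
            nlinarith [ht0 ℓ, ht1 ℓ (Finset.mem_filter.mp hℓ).1]
        _ ≤ ∑ ℓ ∈ A, (lam ℓ - lam p) := by
            apply Finset.sum_le_sum_of_subset_of_nonneg
            · intro ℓ hℓ
              simp only [hA, Finset.mem_filter, Finset.mem_univ, true_and]
              exact (Finset.mem_filter.mp hℓ).2
            · intro ℓ hℓ _
              have hℓn : (ℓ : ℕ) < n := (Finset.mem_filter.mp hℓ).2
              have : lam p ≤ lam ℓ := hdecr ℓ p (by simp [hp, Fin.le_def]; omega)
              linarith
    have hcard : (A.card : ℝ) = n := by rw [hA, pod_card_lt hnm]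
    have hAsum : ∑ ℓ ∈ A, (lam ℓ - lam p) = ∑ ℓ ∈ A, lam ℓ - n * lam p := by
      rw [Finset.sum_sub_distrib, Finset.sum_const, nsmul_eq_mul, hcard]
    have hlp : 0 ≤ lam p := hlam0 p
    have hABsum : ∑ ℓ ∈ S.filter (fun ℓ : Fin m => (ℓ : ℕ) < n), (lam ℓ - lam p) * t ℓ
        = ∑ ℓ ∈ S.filter (fun ℓ : Fin m => (ℓ : ℕ) < n), lam ℓ * t ℓ
          - lam p * ∑ ℓ ∈ S.filter (fun ℓ : Fin m => (ℓ : ℕ) < n), t ℓ := by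
      rw [Finset.mul_sum, ← Finset.sum_sub_distrib]
      apply Finset.sum_congr rfl; intros; ring
    nlinarith [hB, hA1, htn, htsplit, hsplit, hABsum, hAsum,
      mul_le_mul_of_nonneg_left (sub_le_iff_le_add.mpr (le_of_eq htsplit.symm)) hlp]


private lemma pod_col_orth {m : ℕ} (c : Fin m → Fin m → ℝ)
    (horth : ∀ ℓ q, c ℓ ⬝ᵥ c q = if ℓ = q then 1 else 0) :
    ∀ k j : Fin m, ∑ ℓ, c ℓ k * c ℓ j = if k = j then 1 else 0 := by
  have h1 : (Matrix.of c) * (Matrix.of c)ᵀ = 1 := by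
    ext ℓ q
    simpa [Matrix.mul_apply, Matrix.one_apply, dotProduct] using horth ℓ q
  have h2 := mul_eq_one_comm.mp h1
  intro k j
  have := congrFun (congrFun h2 k) j
  simpa [Matrix.mul_apply, Matrix.one_apply, Matrix.transpose_apply] using this

private lemma pod_parseval {m : ℕ} (c : Fin m → Fin m → ℝ)
    (hcol : ∀ k j : Fin m, ∑ ℓ, c ℓ k * c ℓ j = if k = j then 1 else 0)
    (b : Fin m → ℝ) :
    ∑ ℓ, (∑ k, c ℓ k * b k) ^ 2 = ∑ k, b k ^ 2 := by
  have step : ∀ ℓ : Fin m, (∑ k, c ℓ k * b k) ^ 2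
      = ∑ k, ∑ j, b k * b j * (c ℓ k * c ℓ j) := by
    intro ℓ
    rw [sq, Finset.sum_mul_sum]
    exact Finset.sum_congr rfl fun k _ => Finset.sum_congr rfl fun j _ => by ring
  calc ∑ ℓ, (∑ k, c ℓ k * b k) ^ 2
      = ∑ ℓ, ∑ k, ∑ j, b k * b j * (c ℓ k * c ℓ j) := Finset.sum_congr rfl fun ℓ _ => step ℓ
    _ = ∑ k, ∑ j, ∑ ℓ, b k * b j * (c ℓ k * c ℓ j) := by
        rw [Finset.sum_comm]
        exact Finset.sum_congr rfl fun k _ => Finset.sum_comm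
    _ = ∑ k, ∑ j, b k * b j * (if k = j then 1 else 0) := by
        refine Finset.sum_congr rfl fun k _ => Finset.sum_congr rfl fun j _ => ?_
        rw [← Finset.mul_sum, hcol k j]
    _ = ∑ k, b k ^ 2 := by
        refine Finset.sum_congr rfl fun k _ => ?_
        simp [mul_ite, sq]


/-- Reconstruction-error lower bound: if the Gram matrix
`U_{ij} = (1/m)⟨u_i, u_j⟩` has an orthonormal eigenbasis with eigenvalues
`λ_1 ≥ … ≥ λ_m` listed in decreasing order, then for every `n` with
`1 ≤ n ≤ m` and every orthonormal family `ψ_1, …, ψ_n` in `H`, the mean-square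
reconstruction error is at least the sum of the discarded eigenvalues:
`(1/m) Σ_k ‖u_k − Σ_i ⟨u_k, ψ_i⟩ ψ_i‖² ≥ Σ_{ℓ=n+1}^m λ_ℓ`. -/
theorem reconstruction_error_ge_sum_discarded_eigenvalues
    {H : Type*} [NormedAddCommGroup H] [InnerProductSpace ℝ H]
    (m : ℕ) (hm : 1 ≤ m) (u : Fin m → H)
    (U : Matrix (Fin m) (Fin m) ℝ)
    (hU : ∀ i j, U i j = (1 / (m : ℝ)) * ⟪u i, u j⟫)
    (c : Fin m → Fin m → ℝ) (lam : Fin m → ℝ)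
    (horth : ∀ ℓ q, c ℓ ⬝ᵥ c q = if ℓ = q then 1 else 0)
    (heig : ∀ ℓ, U.mulVec (c ℓ) = lam ℓ • c ℓ)
    (hdecr : ∀ i j : Fin m, i ≤ j → lam j ≤ lam i)
    (n : ℕ) (hn : 1 ≤ n) (hnm : n ≤ m)
    (ψ : Fin n → H)
    (hψ : ∀ i j, ⟪ψ i, ψ j⟫ = if i = j then 1 else 0) :
    (1 / (m : ℝ)) * ∑ k, ‖u k - ∑ i, ⟪u k, ψ i⟫ • ψ i‖ ^ 2
      ≥ ∑ ℓ ∈ Finset.univ.filter (fun ℓ : Fin m => n ≤ (ℓ : ℕ)), lam ℓ := by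
  have hm0 : (0 : ℝ) < (m : ℝ) := by exact_mod_cast hm
  have hmne : (m : ℝ) ≠ 0 := ne_of_gt hm0
  -- inner products of snapshots in terms of U
  have huu : ∀ i j, ⟪u i, u j⟫ = (m : ℝ) * U i j := by
    intro i j; rw [hU i j]; field_simp
  have hcol := pod_col_orth c horth
  -- eigenvalue formula: lam ℓ = cℓ ⬝ U.mulVec cℓ
  have hlam_eq : ∀ ℓ, c ℓ ⬝ᵥ U.mulVec (c ℓ) = lam ℓ := by
    intro ℓ
    rw [heig ℓ]
    simp only [dotProduct, Pi.smul_apply, smul_eq_mul]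
    have : ∑ k, c ℓ k * (lam ℓ * c ℓ k) = lam ℓ * (c ℓ ⬝ᵥ c ℓ) := by
      rw [dotProduct, Finset.mul_sum]
      exact Finset.sum_congr rfl fun k _ => by ring
    rw [this, horth ℓ ℓ]; simp
  -- w vectors
  set w : Fin m → H := fun ℓ => ∑ k, c ℓ k • u k with hw
  have hwinner : ∀ ℓ q, ⟪w ℓ, w q⟫ = (m : ℝ) * (lam q * (if ℓ = q then 1 else 0)) := by
    intro ℓ q
    have e1 : ⟪w ℓ, w q⟫ = ∑ k, c ℓ k * ∑ j, c q j * ⟪u k, u j⟫ := by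
      simp only [hw]
      rw [sum_inner]
      refine Finset.sum_congr rfl fun k _ => ?_
      rw [real_inner_smul_left, inner_sum]
      congr 1
      exact Finset.sum_congr rfl fun j _ => real_inner_smul_right _ _ _
    have e2 : ∑ k, c ℓ k * ∑ j, c q j * ⟪u k, u j⟫
        = (m:ℝ) * (c ℓ ⬝ᵥ U.mulVec (c q)) := by
      rw [dotProduct, Finset.mul_sum]
      refine Finset.sum_congr rfl fun k _ => ?_
      rw [Matrix.mulVec, dotProduct, Finset.mul_sum, Finset.mul_sum, Finset.mul_sum]
      refine Finset.sum_congr rfl fun j _ => ?_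
      rw [huu k j]; ring
    rw [e1, e2, heig q]
    simp only [dotProduct, Pi.smul_apply, smul_eq_mul]
    have e3 : ∑ k, c ℓ k * (lam q * c q k) = lam q * (c ℓ ⬝ᵥ c q) := by
      rw [dotProduct, Finset.mul_sum]
      exact Finset.sum_congr rfl fun k _ => by ring
    rw [e3, horth ℓ q]
  have hlam0 : ∀ ℓ, 0 ≤ lam ℓ := by
    intro ℓ
    have h1 := hwinner ℓ ℓ
    rw [if_pos rfl, mul_one] at h1
    have h2 : (0:ℝ) ≤ ⟪w ℓ, w ℓ⟫ := real_inner_self_nonneg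
    rw [h1] at h2
    by_contra hneg
    push_neg at hneg
    nlinarith
  -- b coefficients
  set b : Fin n → Fin m → ℝ := fun i k => ⟪u k, ψ i⟫ with hb
  have hwψ : ∀ ℓ i, ⟪w ℓ, ψ i⟫ = ∑ k, c ℓ k * b i k := by
    intro ℓ i
    rw [hw]
    simp only [sum_inner, real_inner_smul_left, hb]
  -- the set of positive eigenvalues and normalized vectors
  set S : Finset (Fin m) := Finset.univ.filter (fun ℓ => 0 < lam ℓ) with hS
  set v : Fin m → H := fun ℓ => (Real.sqrt ((m:ℝ) * lam ℓ))⁻¹ • w ℓ with hv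
  have hsq : ∀ ℓ ∈ S, Real.sqrt ((m:ℝ) * lam ℓ) ^ 2 = (m:ℝ) * lam ℓ := by
    intro ℓ hℓ
    have : 0 < lam ℓ := (Finset.mem_filter.mp hℓ).2
    exact Real.sq_sqrt (by positivity)
  have hsqpos : ∀ ℓ ∈ S, 0 < Real.sqrt ((m:ℝ) * lam ℓ) := by
    intro ℓ hℓ
    have : 0 < lam ℓ := (Finset.mem_filter.mp hℓ).2
    exact Real.sqrt_pos.mpr (by positivity)
  have hvinner : ∀ ℓ ∈ S, ∀ q ∈ S, ⟪v ℓ, v q⟫ = if ℓ = q then 1 else 0 := by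
    intro ℓ hℓ q hq
    simp only [hv]
    rw [real_inner_smul_left, real_inner_smul_right, hwinner ℓ q]
    by_cases h : ℓ = q
    · subst h
      rw [if_pos rfl, mul_one]
      have h1 := hsq ℓ hℓ
      have h2 := hsqpos ℓ hℓ
      generalize hA : Real.sqrt ((m:ℝ) * lam ℓ) = a at h1 h2 ⊢
      have h2' : a ≠ 0 := ne_of_gt h2
      field_simp
      nlinarith [h1]
    · rw [if_neg h]; ring
  -- coefficients relation on S
  have hcb : ∀ ℓ ∈ S, ∀ i, ∑ k, c ℓ k * b i k = Real.sqrt ((m:ℝ) * lam ℓ) * ⟪v ℓ, ψ i⟫ := by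
    intro ℓ hℓ i
    rw [← hwψ ℓ i]
    simp only [hv]
    rw [real_inner_smul_left, ← mul_assoc,
      mul_inv_cancel₀ (ne_of_gt (hsqpos ℓ hℓ)), one_mul]
  have hcb0 : ∀ ℓ ∉ S, ∀ i, ∑ k, c ℓ k * b i k = 0 := by
    intro ℓ hℓ i
    have hnpos : ¬ 0 < lam ℓ := by simpa [hS] using hℓ
    have hl0 : lam ℓ = 0 := le_antisymm (not_lt.mp hnpos) (hlam0 ℓ)
    have hw0 : w ℓ = 0 := by
      have h1 := hwinner ℓ ℓ
      rw [hl0] at h1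
      simp only [if_pos rfl] at h1
      have : ⟪w ℓ, w ℓ⟫ = 0 := by rw [h1]; ring
      exact inner_self_eq_zero.mp this
    rw [← hwψ ℓ i, hw0, inner_zero_left]
  -- energy decomposition for each i
  have henergy : ∀ i, ∑ k, b i k ^ 2 = ∑ ℓ ∈ S, (m:ℝ) * lam ℓ * ⟪v ℓ, ψ i⟫ ^ 2 := by
    intro i
    rw [← pod_parseval c hcol (b i)]
    rw [← Finset.sum_filter_add_sum_filter_not Finset.univ (fun ℓ => 0 < lam ℓ)
        (fun ℓ => (∑ k, c ℓ k * b i k) ^ 2)]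
    have hzero : ∑ ℓ ∈ Finset.univ.filter (fun ℓ => ¬ 0 < lam ℓ), (∑ k, c ℓ k * b i k) ^ 2 = 0 := by
      apply Finset.sum_eq_zero
      intro ℓ hℓ
      have hns : ℓ ∉ S := by
        simp only [hS, Finset.mem_filter, Finset.mem_univ, true_and]
        simp only [Finset.mem_filter, Finset.mem_univ, true_and] at hℓ
        exact hℓ
      rw [hcb0 ℓ hns i]; ring
    rw [hzero, add_zero]
    refine Finset.sum_congr rfl fun ℓ hℓ => ?_
    have hℓS : ℓ ∈ S := hℓ
    rw [hcb ℓ hℓS i, mul_pow, hsq ℓ hℓS]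
  -- Bessel inequalities
  have hψON : Orthonormal ℝ ψ := orthonormal_iff_ite.mpr hψ
  set t : Fin m → ℝ := fun ℓ => ∑ i, ⟪v ℓ, ψ i⟫ ^ 2 with ht
  have ht0 : ∀ ℓ, 0 ≤ t ℓ := fun ℓ => Finset.sum_nonneg fun i _ => sq_nonneg _
  have hvnorm : ∀ ℓ ∈ S, ‖v ℓ‖ ^ 2 = 1 := by
    intro ℓ hℓ
    rw [← real_inner_self_eq_norm_sq, hvinner ℓ hℓ ℓ hℓ, if_pos rfl]
  have ht1 : ∀ ℓ ∈ S, t ℓ ≤ 1 := by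
    intro ℓ hℓ
    have hB := hψON.sum_inner_products_le (v ℓ) (s := Finset.univ)
    rw [hvnorm ℓ hℓ] at hB
    refine le_trans (le_of_eq ?_) hB
    refine Finset.sum_congr rfl fun i _ => ?_
    simp [Real.norm_eq_abs, sq_abs, real_inner_comm]
  have hvON : Orthonormal ℝ (fun ℓ : {x // x ∈ S} => v ℓ) := by
    rw [orthonormal_iff_ite]
    intro ℓ q
    rw [hvinner ℓ ℓ.2 q q.2]
    simp only [Subtype.ext_iff]
  have hsumt : ∑ ℓ ∈ S, t ℓ ≤ (n : ℝ) := by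
    have h1 : ∑ ℓ ∈ S, t ℓ = ∑ i, ∑ ℓ ∈ S, ⟪v ℓ, ψ i⟫ ^ 2 := Finset.sum_comm
    rw [h1]
    have h2 : ∀ i : Fin n, ∑ ℓ ∈ S, ⟪v ℓ, ψ i⟫ ^ 2 ≤ 1 := by
      intro i
      have hB := hvON.sum_inner_products_le (ψ i) (s := Finset.univ)
      have hψn : ‖ψ i‖ ^ 2 = 1 := by
        rw [← real_inner_self_eq_norm_sq, hψ i i, if_pos rfl]
      rw [hψn] at hB
      refine le_trans (le_of_eq ?_) hB
      rw [← Finset.sum_coe_sort S (fun ℓ => ⟪v ℓ, ψ i⟫ ^ 2)]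
      exact Finset.sum_congr rfl fun ℓ _ => by simp [Real.norm_eq_abs, sq_abs]
    calc ∑ i, ∑ ℓ ∈ S, ⟪v ℓ, ψ i⟫ ^ 2 ≤ ∑ _i : Fin n, (1:ℝ) :=
          Finset.sum_le_sum fun i _ => h2 i
      _ = n := by simp
  -- trace identity
  have htrace : ∑ ℓ, lam ℓ = ∑ k, U k k := by
    have h1 : ∀ ℓ, lam ℓ = ∑ k, ∑ j, U k j * (c ℓ k * c ℓ j) := by
      intro ℓ
      rw [← hlam_eq ℓ, dotProduct]
      refine Finset.sum_congr rfl fun k _ => ?_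
      rw [Matrix.mulVec, dotProduct, Finset.mul_sum]
      exact Finset.sum_congr rfl fun j _ => by ring
    calc ∑ ℓ, lam ℓ = ∑ ℓ, ∑ k, ∑ j, U k j * (c ℓ k * c ℓ j) :=
          Finset.sum_congr rfl fun ℓ _ => h1 ℓ
      _ = ∑ k, ∑ j, ∑ ℓ, U k j * (c ℓ k * c ℓ j) := by
          rw [Finset.sum_comm]
          exact Finset.sum_congr rfl fun k _ => Finset.sum_comm
      _ = ∑ k, ∑ j, U k j * (if k = j then 1 else 0) := by
          refine Finset.sum_congr rfl fun k _ => Finset.sum_congr rfl fun j _ => ?_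
          rw [← Finset.mul_sum, hcol k j]
      _ = ∑ k, U k k := by
          refine Finset.sum_congr rfl fun k _ => ?_
          simp [mul_ite]
  -- error identity per snapshot
  have herr : ∀ k, ‖u k - ∑ i, ⟪u k, ψ i⟫ • ψ i‖ ^ 2 = ‖u k‖ ^ 2 - ∑ i, b i k ^ 2 :=
    fun k => pod_proj_error ψ hψ (u k)
  have hLHS : (1 / (m:ℝ)) * ∑ k, ‖u k - ∑ i, ⟪u k, ψ i⟫ • ψ i‖ ^ 2
      = ∑ ℓ, lam ℓ - ∑ ℓ ∈ S, lam ℓ * t ℓ := by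
    have e1 : ∑ k, ‖u k - ∑ i, ⟪u k, ψ i⟫ • ψ i‖ ^ 2
        = ∑ k, ‖u k‖ ^ 2 - ∑ k, ∑ i, b i k ^ 2 := by
      rw [← Finset.sum_sub_distrib]
      exact Finset.sum_congr rfl fun k _ => herr k
    have e2 : (1/(m:ℝ)) * ∑ k, ‖u k‖ ^ 2 = ∑ ℓ, lam ℓ := by
      rw [htrace, Finset.mul_sum]
      refine Finset.sum_congr rfl fun k _ => ?_
      rw [hU k k, real_inner_self_eq_norm_sq]
    have e3 : (1/(m:ℝ)) * ∑ k, ∑ i, b i k ^ 2 = ∑ ℓ ∈ S, lam ℓ * t ℓ := by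
      rw [Finset.sum_comm, Finset.sum_congr rfl fun i (_ : i ∈ Finset.univ) => henergy i,
        Finset.sum_comm, Finset.mul_sum]
      refine Finset.sum_congr rfl fun ℓ _ => ?_
      simp only [ht]
      rw [Finset.mul_sum, Finset.mul_sum]
      refine Finset.sum_congr rfl fun i _ => ?_
      field_simp
    rw [e1, mul_sub, e2, e3]
  rw [ge_iff_le, hLHS]
  have hbound := pod_sum_bound hnm lam t hlam0 hdecr S ht0 ht1 hsumt
  have hsplitfull : ∑ ℓ ∈ Finset.univ.filter (fun ℓ : Fin m => (ℓ:ℕ) < n), lam ℓ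
      + ∑ ℓ ∈ Finset.univ.filter (fun ℓ : Fin m => ¬ (ℓ:ℕ) < n), lam ℓ = ∑ ℓ, lam ℓ :=
    Finset.sum_filter_add_sum_filter_not _ _ _
  have hfe : Finset.univ.filter (fun ℓ : Fin m => n ≤ (ℓ:ℕ))
      = Finset.univ.filter (fun ℓ : Fin m => ¬ (ℓ:ℕ) < n) := by
    apply Finset.filter_congr; intro ℓ _; simp [not_lt]
  rw [hfe]
  linarith
end

section
/- Let H be a real inner product space, m ≥ 1, u_1, …, u_m ∈ H, and U the Gram matrix U_{ij} = (1/m)⟨u_i, u_j⟩. Suppose c_1, …, c_m is an orthonormal basis of ℝ^m of eigenvectors of U with eigenvalues λ_1 ≥ λ_2 ≥ … ≥ λ_m, and let 1 ≤ n ≤ m be such that λ_n > 0. Define the POD modes φ_ℓ = (m λ_ℓ)^{-1/2} Σ_{j=1}^m (c_ℓ)_j u_j for ℓ = 1, …, n. Then the mean-square reconstruction error achieved by the first n POD modes equals exactly the sum of the discarded eigenvalues: (1/m) Σ_{k=1}^m ‖u_k − Σ_{i=1}^n ⟨u_k, φ_i⟩ φ_i‖² = Σ_{ℓ=n+1}^m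 λ_ℓ. In particular, together with the lower bound over all orthonormal families, the POD modes minimize the mean-square reconstruction error. -/
open RealInnerProductSpace Matrix Finset

/-- The POD mode associated to an eigenpair `(lam, c)` of the Gram matrix of the
snapshots `u`: `φ = (m·lam)^(-1/2) Σ_j c_j u_j`. -/
noncomputable def podMode {H : Type*} [NormedAddCommGroup H] [InnerProductSpace ℝ H]
    {m : ℕ} (u : Fin m → H) (lam : ℝ) (c : Fin m → ℝ) : H :=
  (Real.sqrt (m * lam))⁻¹ • ∑ j, c j • u j

/-- Optimality of POD: if the Gram matrix `U_{ij} = (1/m)⟨u_i, u_j⟩` has an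
orthonormal eigenbasis `c_1, …, c_m` with eigenvalues `λ_1 ≥ … ≥ λ_m` listed in
decreasing order and `λ_n > 0`, then the mean-square reconstruction error
achieved by the first `n` POD modes `φ_ℓ = (m λ_ℓ)^(-1/2) Σ_j (c_ℓ)_j u_j`
equals exactly the sum of the discarded eigenvalues:
`(1/m) Σ_k ‖u_k − Σ_{i=1}^n ⟨u_k, φ_i⟩ φ_i‖² = Σ_{ℓ=n+1}^m λ_ℓ`. -/
theorem podModes_reconstruction_error_eq_sum_discarded_eigenvalues
    {H : Type*} [NormedAddCommGroup H] [InnerProductSpace ℝ H]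
    (m : ℕ) (hm : 1 ≤ m) (u : Fin m → H)
    (U : Matrix (Fin m) (Fin m) ℝ)
    (hU : ∀ i j, U i j = (1 / (m : ℝ)) * ⟪u i, u j⟫)
    (c : Fin m → Fin m → ℝ) (lam : Fin m → ℝ)
    (horth : ∀ ℓ q, c ℓ ⬝ᵥ c q = if ℓ = q then 1 else 0)
    (heig : ∀ ℓ, U.mulVec (c ℓ) = lam ℓ • c ℓ)
    (hdecr : ∀ i j : Fin m, i ≤ j → lam j ≤ lam i)
    (n : ℕ) (hn : 1 ≤ n) (hnm : n ≤ m)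
    (hpos : 0 < lam ⟨n - 1, by omega⟩) :
    (1 / (m : ℝ)) * ∑ k,
        ‖u k - ∑ i : Fin n,
            ⟪u k, podMode u (lam (Fin.castLE hnm i)) (c (Fin.castLE hnm i))⟫ •
              podMode u (lam (Fin.castLE hnm i)) (c (Fin.castLE hnm i))‖ ^ 2
      = ∑ ℓ ∈ Finset.univ.filter (fun ℓ : Fin m => n ≤ (ℓ : ℕ)), lam ℓ := by
  have hm0 : (0:ℝ) < m := by exact_mod_cast Nat.lt_of_lt_of_le Nat.zero_lt_one hm
  have hmne : (m:ℝ) ≠ 0 := ne_of_gt hm0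
  have huu : ∀ k j, ⟪u k, u j⟫ = (m:ℝ) * U k j := by
    intro k j; rw [hU]; field_simp
  -- eigenvector equation, pointwise
  have hUc : ∀ (ℓ k : Fin m), ∑ j, U k j * c ℓ j = lam ℓ * c ℓ k := by
    intro ℓ k
    have := congrFun (heig ℓ) k
    simpa [Matrix.mulVec, dotProduct, Pi.smul_apply, smul_eq_mul] using this
  -- positivity of retained eigenvalues
  have hpos' : ∀ i : Fin n, 0 < lam (Fin.castLE hnm i) := by
    intro i
    refine lt_of_lt_of_le hpos (hdecr _ ⟨n-1, by omega⟩ ?_)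
    simp only [Fin.le_def, Fin.castLE]
    omega
  -- inner product of a snapshot with a POD mode
  have hinner_uφ : ∀ (k ℓ : Fin m), 0 < lam ℓ →
      ⟪u k, podMode u (lam ℓ) (c ℓ)⟫ = Real.sqrt ((m:ℝ) * lam ℓ) * c ℓ k := by
    intro k ℓ hl
    have hml : (0:ℝ) < (m:ℝ) * lam ℓ := by positivity
    have hsne : Real.sqrt ((m:ℝ) * lam ℓ) ≠ 0 := ne_of_gt (Real.sqrt_pos.mpr hml)
    have hsq : Real.sqrt ((m:ℝ)*lam ℓ) * Real.sqrt ((m:ℝ)*lam ℓ) = (m:ℝ) * lam ℓ :=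
      Real.mul_self_sqrt hml.le
    unfold podMode
    rw [real_inner_smul_right, inner_sum]
    simp only [real_inner_smul_right]
    have h1 : ∑ j, c ℓ j * ⟪u k, u j⟫ = (m:ℝ) * (lam ℓ * c ℓ k) := by
      calc ∑ j, c ℓ j * ⟪u k, u j⟫ = ∑ j, (m:ℝ) * (U k j * c ℓ j) := by
            refine Finset.sum_congr rfl fun j _ => by rw [huu]; ring
        _ = (m:ℝ) * ∑ j, U k j * c ℓ j := by rw [Finset.mul_sum]
        _ = (m:ℝ) * (lam ℓ * c ℓ k) := by rw [hUc]
    rw [h1, inv_mul_eq_div, div_eq_iff hsne]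
    linear_combination (-(c ℓ k)) * hsq
  -- orthonormality of POD modes
  have hφφ : ∀ (ℓ q : Fin m), 0 < lam ℓ → 0 < lam q →
      ⟪podMode u (lam ℓ) (c ℓ), podMode u (lam q) (c q)⟫ = if ℓ = q then 1 else 0 := by
    intro ℓ q hl hq
    have hml : (0:ℝ) < (m:ℝ) * lam ℓ := by positivity
    have hsne : Real.sqrt ((m:ℝ) * lam ℓ) ≠ 0 := ne_of_gt (Real.sqrt_pos.mpr hml)
    have e : ⟪podMode u (lam ℓ) (c ℓ), podMode u (lam q) (c q)⟫
        = (Real.sqrt ((m:ℝ)*lam ℓ))⁻¹ * (Real.sqrt ((m:ℝ)*lam q) * (c ℓ ⬝ᵥ c q)) := by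
      nth_rewrite 1 [podMode]
      rw [real_inner_smul_left, sum_inner]
      congr 1
      rw [dotProduct, Finset.mul_sum]
      refine Finset.sum_congr rfl fun j _ => ?_
      rw [real_inner_smul_left, hinner_uφ j q hq]
      ring
    rw [e, horth]
    by_cases h : ℓ = q
    · subst h
      rw [if_pos rfl, mul_one, inv_mul_cancel₀ hsne]
    · rw [if_neg h, mul_zero, mul_zero]
  -- completeness : ∑_ℓ c ℓ j * c ℓ k = δ_{jk}
  have hcomp : ∀ j k : Fin m, (∑ ℓ, c ℓ j * c ℓ k) = if j = k then 1 else 0 := by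
    intro j k
    set C : Matrix (Fin m) (Fin m) ℝ := Matrix.of c with hC
    have h1 : C * Cᵀ = 1 := by
      ext a b
      simp only [Matrix.mul_apply, Matrix.transpose_apply, Matrix.one_apply, hC, Matrix.of_apply]
      simpa [dotProduct] using horth a b
    have h2 : Cᵀ * C = 1 := mul_eq_one_comm.mp h1
    have := congrFun (congrFun h2 j) k
    simpa [Matrix.mul_apply, Matrix.transpose_apply, Matrix.one_apply, hC] using this
  -- spectral decomposition on the diagonal, hence trace identity
  have hspec : ∀ j k : Fin m, U j k = ∑ ℓ, lam ℓ * (c ℓ j * c ℓ k) := by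
    intro j k
    calc U j k = ∑ i, U j i * (if i = k then 1 else 0) := by
          rw [eq_comm]
          simp [mul_ite]
      _ = ∑ i, U j i * ∑ ℓ, c ℓ i * c ℓ k := by
          refine Finset.sum_congr rfl fun i _ => by rw [hcomp]
      _ = ∑ i, ∑ ℓ, U j i * (c ℓ i * c ℓ k) := by
          refine Finset.sum_congr rfl fun i _ => by rw [Finset.mul_sum]
      _ = ∑ ℓ, ∑ i, U j i * (c ℓ i * c ℓ k) := Finset.sum_comm
      _ = ∑ ℓ, (∑ i, U j i * c ℓ i) * c ℓ k := by
          refine Finset.sum_congr rfl fun ℓ _ => ?_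
          rw [Finset.sum_mul]
          exact Finset.sum_congr rfl fun i _ => by ring
      _ = ∑ ℓ, lam ℓ * (c ℓ j * c ℓ k) := by
          refine Finset.sum_congr rfl fun ℓ _ => by rw [hUc]; ring
  have htrace : ∑ k, U k k = ∑ ℓ, lam ℓ := by
    calc ∑ k, U k k = ∑ k, ∑ ℓ, lam ℓ * (c ℓ k * c ℓ k) := by
          exact Finset.sum_congr rfl fun k _ => hspec k k
      _ = ∑ ℓ, lam ℓ * (c ℓ ⬝ᵥ c ℓ) := by
          rw [Finset.sum_comm]
          exact Finset.sum_congr rfl fun ℓ _ => by rw [dotProduct, Finset.mul_sum]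
      _ = ∑ ℓ, lam ℓ := by
          refine Finset.sum_congr rfl fun ℓ _ => by rw [horth]; simp
  -- per-snapshot norm identity
  set Φ : Fin n → H := fun i => podMode u (lam (Fin.castLE hnm i)) (c (Fin.castLE hnm i)) with hΦdef
  have hΦorth : ∀ i j : Fin n, ⟪Φ i, Φ j⟫ = if i = j then 1 else 0 := by
    intro i j
    simp only [hΦdef]
    rw [hφφ _ _ (hpos' i) (hpos' j)]
    congr 1
    simp [Fin.castLE_inj]
  have hk : ∀ k : Fin m, ‖u k - ∑ i : Fin n, ⟪u k, Φ i⟫ • Φ i‖ ^ 2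
      = ‖u k‖ ^ 2 - ∑ i : Fin n, ((m:ℝ) * lam (Fin.castLE hnm i)) * (c (Fin.castLE hnm i) k)^2 := by
    intro k
    have hv1 : ⟪u k, ∑ i : Fin n, ⟪u k, Φ i⟫ • Φ i⟫ = ∑ i : Fin n, ⟪u k, Φ i⟫ ^ 2 := by
      rw [inner_sum]
      exact Finset.sum_congr rfl fun i _ => by rw [real_inner_smul_right, sq]
    have hv2 : ‖∑ i : Fin n, ⟪u k, Φ i⟫ • Φ i‖ ^ 2 = ∑ i : Fin n, ⟪u k, Φ i⟫ ^ 2 := by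
      rw [← real_inner_self_eq_norm_sq, sum_inner]
      simp only [real_inner_smul_left, inner_sum, real_inner_smul_right]
      refine Finset.sum_congr rfl fun i _ => ?_
      rw [Finset.sum_eq_single i (fun j _ hj => by rw [hΦorth, if_neg (Ne.symm hj)]; ring)
        (fun h => absurd (Finset.mem_univ i) h)]
      rw [hΦorth, if_pos rfl]
      ring
    have haval : ∀ i : Fin n, ⟪u k, Φ i⟫ ^ 2
        = ((m:ℝ) * lam (Fin.castLE hnm i)) * (c (Fin.castLE hnm i) k)^2 := by
      intro i
      have hml : (0:ℝ) ≤ (m:ℝ) * lam (Fin.castLE hnm i) := by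
        have := hpos' i; positivity
      simp only [hΦdef]
      rw [hinner_uφ k _ (hpos' i), mul_pow, Real.sq_sqrt hml]
    rw [norm_sub_sq_real, hv1, hv2]
    have : ∑ i : Fin n, ⟪u k, Φ i⟫ ^ 2
        = ∑ i : Fin n, ((m:ℝ) * lam (Fin.castLE hnm i)) * (c (Fin.castLE hnm i) k)^2 :=
      Finset.sum_congr rfl fun i _ => haval i
    rw [this]
    ring
  -- sum the per-snapshot identities
  have hsum : ∑ k, ‖u k - ∑ i : Fin n, ⟪u k, Φ i⟫ • Φ i‖ ^ 2
      = (m:ℝ) * ∑ ℓ, lam ℓ - (m:ℝ) * ∑ i : Fin n, lam (Fin.castLE hnm i) := by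
    have h1 : ∑ k, ‖u k‖ ^ 2 = (m:ℝ) * ∑ ℓ, lam ℓ := by
      rw [← htrace, Finset.mul_sum]
      refine Finset.sum_congr rfl fun k _ => ?_
      rw [← real_inner_self_eq_norm_sq, huu]
    have h2 : ∑ k, ∑ i : Fin n, ((m:ℝ) * lam (Fin.castLE hnm i)) * (c (Fin.castLE hnm i) k)^2
        = (m:ℝ) * ∑ i : Fin n, lam (Fin.castLE hnm i) := by
      rw [Finset.sum_comm, Finset.mul_sum]
      refine Finset.sum_congr rfl fun i _ => ?_
      have : ∑ k, ((m:ℝ) * lam (Fin.castLE hnm i)) * (c (Fin.castLE hnm i) k)^2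
          = ((m:ℝ) * lam (Fin.castLE hnm i)) * (c (Fin.castLE hnm i) ⬝ᵥ c (Fin.castLE hnm i)) := by
        rw [dotProduct, Finset.mul_sum]
        exact Finset.sum_congr rfl fun k _ => by ring
      rw [this, horth]
      simp
    calc ∑ k, ‖u k - ∑ i : Fin n, ⟪u k, Φ i⟫ • Φ i‖ ^ 2
        = ∑ k, (‖u k‖ ^ 2 - ∑ i : Fin n, ((m:ℝ) * lam (Fin.castLE hnm i)) * (c (Fin.castLE hnm i) k)^2) :=
          Finset.sum_congr rfl fun k _ => hk k
      _ = ∑ k, ‖u k‖ ^ 2 - ∑ k, ∑ i : Fin n, ((m:ℝ) * lam (Fin.castLE hnm i)) * (c (Fin.castLE hnm i) k)^2 :=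
          Finset.sum_sub_distrib _ _
      _ = (m:ℝ) * ∑ ℓ, lam ℓ - (m:ℝ) * ∑ i : Fin n, lam (Fin.castLE hnm i) := by rw [h1, h2]
  -- index juggling for the right-hand side
  have hsplit : ∑ ℓ, lam ℓ
      = (∑ ℓ ∈ Finset.univ.filter (fun ℓ : Fin m => n ≤ (ℓ : ℕ)), lam ℓ)
        + ∑ i : Fin n, lam (Fin.castLE hnm i) := by
    have e1 : ∑ i : Fin n, lam (Fin.castLE hnm i)
        = ∑ ℓ ∈ Finset.univ.filter (fun ℓ : Fin m => ¬ n ≤ (ℓ : ℕ)), lam ℓ := by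
      classical
      have hl : ∑ i : Fin n, lam (Fin.castLE hnm i)
          = ∑ j ∈ Finset.range n, (if h : j < m then lam ⟨j, h⟩ else 0) := by
        rw [← Fin.sum_univ_eq_sum_range (fun j => if h : j < m then lam ⟨j, h⟩ else 0) n]
        refine Finset.sum_congr rfl fun i _ => ?_
        rw [dif_pos (lt_of_lt_of_le i.isLt hnm)]
        exact congrArg lam (Fin.ext rfl)
      have hr : ∑ ℓ ∈ Finset.univ.filter (fun ℓ : Fin m => ¬ n ≤ (ℓ : ℕ)), lam ℓ
          = ∑ j ∈ Finset.range n, (if h : j < m then lam ⟨j, h⟩ else 0) := by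
        rw [Finset.sum_filter]
        have h1 : ∑ ℓ : Fin m, (if ¬ n ≤ (ℓ:ℕ) then lam ℓ else 0)
            = ∑ j ∈ Finset.range m,
                (if ¬ n ≤ j then (if h : j < m then lam ⟨j, h⟩ else 0) else 0) := by
          rw [← Fin.sum_univ_eq_sum_range
            (fun j => if ¬ n ≤ j then (if h : j < m then lam ⟨j, h⟩ else 0) else 0) m]
          refine Finset.sum_congr rfl fun ℓ _ => ?_
          by_cases h : n ≤ (ℓ:ℕ)
          · simp [h]
          · rw [if_pos h, if_pos h, dif_pos ℓ.isLt]
        rw [h1, ← Finset.sum_filter]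
        congr 1
        ext j
        simp only [Finset.mem_filter, Finset.mem_range]
        omega
      exact hl.trans hr.symm
    rw [e1, ← Finset.sum_filter_add_sum_filter_not Finset.univ (fun ℓ : Fin m => n ≤ (ℓ:ℕ)) lam]
  -- conclude
  rw [hsum, hsplit]
  field_simp
  ring
end
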